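/- Let Λ be a lattice with involution θ, σ(λ) = λ + θ(λ), and let Δ ⊂ Λ be a finite linearly independent set permuted by θ. Then the semigroup Λ^θ ∩ Q^pos, where Q^pos is the sub-semigroup generated by Δ, is generated by the elements α ∈ Λ^θ ∩ Δ together with the elements σ(α) for α ∈ Δ. -/

import Mathlib

/-- Let `Δ ⊂ Λ` be a finite linearly independent set permuted by the
involution `θ`, `Qpos` the sub-semigroup generated by `Δ`, and `σ λ = λ + θ λ`.
Then the semigroup `Λ^θ ∩ Qpos` is generated by the elements `α ∈ Λ^θ ∩ Δ`
together with the elements `σ α` for `α ∈ Δ`. -/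
theorem stmt4 (Λ : Type*) [AddCommGroup Λ] [Module.Free ℤ Λ] [Module.Finite ℤ Λ]
    (θ : Λ →+ Λ) (hθ : ∀ l, θ (θ l) = l)
    (Δ : Set Λ) (hΔfin : Δ.Finite) (hθΔ : θ '' Δ = Δ)
    (hind : LinearIndependent ℤ (fun a : Δ => (a : Λ)))
    (σ : Λ → Λ) (hσ : ∀ l, σ l = l + θ l) :
    {l : Λ | θ l = l} ∩ (AddSubsemigroup.closure Δ : Set Λ) =
      (AddSubsemigroup.closure ({α ∈ Δ | θ α = α} ∪ σ '' Δ) : Set Λ) := by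
  classical
  haveI : Fintype Δ := hΔfin.fintype
  set G : Set Λ := {α ∈ Δ | θ α = α} ∪ σ '' Δ with hG
  have hθmem : ∀ a : Δ, θ (a : Λ) ∈ Δ := fun a => by
    have : θ (a : Λ) ∈ θ '' Δ := ⟨a, a.2, rfl⟩
    rwa [hθΔ] at this
  set e : Δ → Δ := fun a => ⟨θ (a : Λ), hθmem a⟩ with he_def
  have he : ∀ a, e (e a) = a := fun a => Subtype.ext (hθ a)
  have heinj : ∀ x y, e x = e y → x = y := fun x y h => by rw [← he x, h, he y]
  -- extraction lemma
  have step : ∀ (f : Δ → ℕ) (a : Δ), f a ≠ 0 →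
      ∑ b, f b • (b : Λ) = (a : Λ) + ∑ b, Function.update f a (f a - 1) b • (b : Λ) := by
    intro f a ha
    have h1 : ∑ b, f b • (b : Λ)
        = f a • (a : Λ) + ∑ b ∈ Finset.univ.erase a, f b • (b : Λ) :=
      (Finset.add_sum_erase _ _ (Finset.mem_univ a)).symm
    have h2 : ∑ b, Function.update f a (f a - 1) b • (b : Λ)
        = (f a - 1) • (a : Λ) + ∑ b ∈ Finset.univ.erase a, f b • (b : Λ) := by
      rw [← Finset.add_sum_erase _ _ (Finset.mem_univ a)]
      congr 1
      · rw [Function.update_self]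
      · exact Finset.sum_congr rfl fun b hb => by
          rw [Function.update_of_ne (Finset.ne_of_mem_erase hb)]
    have hfa : f a = (f a - 1) + 1 := by omega
    have h3 : f a • (a : Λ) = (a : Λ) + (f a - 1) • (a : Λ) := by
      conv_lhs => rw [hfa]
      rw [succ_nsmul']
    rw [h1, h2, h3, add_assoc]
  have sum_lt : ∀ (f : Δ → ℕ) (a : Δ), f a ≠ 0 →
      ∑ b, Function.update f a (f a - 1) b < ∑ b, f b := by
    intro f a ha
    apply Finset.sum_lt_sum
    · intro b _
      by_cases hb : b = a
      · subst hb; rw [Function.update_self]; omega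
      · rw [Function.update_of_ne hb]
    · exact ⟨a, Finset.mem_univ a, by rw [Function.update_self]; omega⟩
  -- key lemma
  have key : ∀ N (f : Δ → ℕ), ∑ b, f b = N → (∀ b, f (e b) = f b) → (∃ b, f b ≠ 0) →
      (∑ b, f b • (b : Λ)) ∈ AddSubsemigroup.closure G := by
    intro N
    induction N using Nat.strong_induction_on with
    | _ N ih =>
      intro f hN hinv ⟨a, ha⟩
      by_cases hfix : e a = a
      · -- θ a = a
        set f' := Function.update f a (f a - 1) with hf'
        have haG : (a : Λ) ∈ G := Or.inl ⟨a.2, congrArg Subtype.val hfix⟩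
        have hinv' : ∀ b, f' (e b) = f' b := by
          intro b
          by_cases hb : b = a
          · subst hb; rw [hfix]
          · have h1 : e b ≠ a := fun h => hb (by rw [← he b, h, hfix])
            rw [hf', Function.update_of_ne h1, Function.update_of_ne hb, hinv]
        rw [step f a ha]
        by_cases hz : ∀ b, f' b = 0
        · have : ∑ b, f' b • (b : Λ) = 0 := by
            apply Finset.sum_eq_zero; intro b _; rw [hz b, zero_smul]
          rw [this, add_zero]
          exact AddSubsemigroup.subset_closure haG
        · push_neg at hz
          exact AddSubsemigroup.add_mem _ (AddSubsemigroup.subset_closure haG)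
            (ih _ (hN ▸ sum_lt f a ha) f' rfl hinv' hz)
      · -- pair case
        have hfa' : f (e a) ≠ 0 := by rw [hinv a]; exact ha
        set f₁ := Function.update f a (f a - 1) with hf₁
        have hf₁ea : f₁ (e a) = f (e a) := Function.update_of_ne hfix _ _
        set f' := Function.update f₁ (e a) (f₁ (e a) - 1) with hf'
        have hane : a ≠ e a := fun h => hfix h.symm
        have hf'a : f' a = f a - 1 := by
          rw [hf', Function.update_of_ne hane, hf₁, Function.update_self]
        have hf'ea : f' (e a) = f a - 1 := by
          rw [hf', Function.update_self, hf₁ea, hinv]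
        have hf'other : ∀ b, b ≠ a → b ≠ e a → f' b = f b := by
          intro b hb1 hb2
          rw [hf', Function.update_of_ne hb2, hf₁, Function.update_of_ne hb1]
        have hσaG : (a : Λ) + θ (a : Λ) ∈ G := by
          refine Or.inr ⟨a, a.2, ?_⟩
          rw [hσ]
        have hinv' : ∀ b, f' (e b) = f' b := by
          intro b
          by_cases hb : b = a
          · subst hb; rw [hf'ea, hf'a]
          · by_cases hb2 : b = e a
            · subst hb2; rw [he, hf'a, hf'ea]
            · have h1 : e b ≠ e a := fun h => hb (heinj _ _ h)
              have h2 : e b ≠ a := fun h => hb2 (by rw [← he b, h])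
              rw [hf'other _ h2 h1, hf'other _ hb hb2, hinv]
        have hrw : ∑ b, f b • (b : Λ) = ((a : Λ) + θ (a : Λ)) + ∑ b, f' b • (b : Λ) := by
          rw [step f a ha, ← hf₁, step f₁ (e a) (by rw [hf₁ea]; exact hfa'), ← hf',
            ← add_assoc]
        rw [hrw]
        by_cases hz : ∀ b, f' b = 0
        · have : ∑ b, f' b • (b : Λ) = 0 := by
            apply Finset.sum_eq_zero; intro b _; rw [hz b, zero_smul]
          rw [this, add_zero]
          exact AddSubsemigroup.subset_closure hσaG
        · push_neg at hz
          have hlt : ∑ b, f' b < N := by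
            calc ∑ b, f' b < ∑ b, f₁ b := by
                  rw [hf']; exact sum_lt f₁ (e a) (by rw [hf₁ea]; exact hfa')
            _ ≤ N := le_of_lt (hN ▸ sum_lt f a ha)
          exact AddSubsemigroup.add_mem _ (AddSubsemigroup.subset_closure hσaG)
            (ih _ hlt f' rfl hinv' hz)
  have rep : ∀ y, y ∈ AddSubsemigroup.closure Δ →
      ∃ f : Δ → ℕ, (∃ b, f b ≠ 0) ∧ y = ∑ b, f b • (b : Λ) := by
    intro y hy
    induction hy using AddSubsemigroup.closure_induction with
    | mem z hz =>
      refine ⟨fun b => if b = ⟨z, hz⟩ then 1 else 0, ⟨⟨z, hz⟩, by simp⟩, ?_⟩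
      simp
    | add u v hu hv ihu ihv =>
      obtain ⟨fu, ⟨b₀, hb₀⟩, hueq⟩ := ihu
      obtain ⟨fv, _, hveq⟩ := ihv
      refine ⟨fun b => fu b + fv b, ⟨b₀, ?_⟩, ?_⟩
      · show fu b₀ + fv b₀ ≠ 0
        omega
      rw [hueq, hveq, ← Finset.sum_add_distrib]
      exact Finset.sum_congr rfl fun b _ => (add_nsmul _ _ _).symm
  apply Set.Subset.antisymm
  · rintro x ⟨hfix, hx⟩
    obtain ⟨f, hne, hxf⟩ := rep x hx
    have hinv : ∀ b, f (e b) = f b := by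
      have h1 : ∑ b, f b • ((e b : Δ) : Λ) = ∑ b, f b • (b : Λ) := by
        rw [← hxf]
        calc ∑ b, f b • ((e b : Δ) : Λ) = ∑ b, f b • θ (b : Λ) := rfl
          _ = θ (∑ b, f b • (b : Λ)) := by
              rw [map_sum]
              exact Finset.sum_congr rfl fun b _ => (map_nsmul θ _ _).symm
          _ = x := by rw [← hxf]; exact hfix
      have h2 : ∑ b, f (e b) • (b : Λ) = ∑ b, f b • ((e b : Δ) : Λ) := by
        refine Fintype.sum_equiv (Function.Involutive.toPerm e he) _ _ fun b => ?_
        show f (e b) • (b : Λ) = f (e b) • θ (θ (b : Λ))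
        rw [hθ]
      have h3 : ∑ b, ((f (e b) : ℤ) - (f b : ℤ)) • (b : Λ) = 0 := by
        simp only [sub_smul, Finset.sum_sub_distrib]
        rw [sub_eq_zero]
        calc ∑ b, (f (e b) : ℤ) • (b : Λ) = ∑ b, f (e b) • (b : Λ) := by
              simp [natCast_zsmul]
          _ = ∑ b, f b • (b : Λ) := h2.trans h1
          _ = ∑ b, (f b : ℤ) • (b : Λ) := by simp [natCast_zsmul]
      intro b
      have := Fintype.linearIndependent_iff.mp hind _ h3 b
      omega
    rw [hxf]
    exact key _ f rfl hinv hne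
  · have hsub : AddSubsemigroup.closure G ≤
        { carrier := {l : Λ | θ l = l} ∩ (AddSubsemigroup.closure Δ : Set Λ)
          add_mem' := by
            rintro x y ⟨hx1, hx2⟩ ⟨hy1, hy2⟩
            exact ⟨by simp only [Set.mem_setOf_eq] at *; rw [map_add, hx1, hy1],
              AddSubsemigroup.add_mem _ hx2 hy2⟩ } := by
      rw [AddSubsemigroup.closure_le]
      rintro x (⟨hxΔ, hxθ⟩ | ⟨a, haΔ, rfl⟩)
      · exact ⟨hxθ, AddSubsemigroup.subset_closure hxΔ⟩
      · constructor
        · show θ (σ a) = σ a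
          rw [hσ, map_add, hθ, add_comm]
        · rw [hσ]
          exact AddSubsemigroup.add_mem _ (AddSubsemigroup.subset_closure haΔ)
            (AddSubsemigroup.subset_closure (by
              have : θ a ∈ θ '' Δ := ⟨a, haΔ, rfl⟩
              rwa [hθΔ] at this))
    exact hsub
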